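/- Let q be a prime power and A = 𝔽_q[T]. Let P ∈ A be a monic irreducible polynomial, α ∈ 𝔽_q^×, and M_P = α·C_P(1) the associated Mersenne number. Then every monic irreducible polynomial Q ∈ A dividing M_P satisfies Q ≡ 1 (mod P). -/

import Mathlib

open Polynomial

/-- Compositional iterates of the Carlitz polynomial `C_T(x) = T·x + x^q`, so that
`carlitzTpow F n = C_{T^n}(x) ∈ (𝔽_q[T])[x]` (here `q = Fintype.card F`). -/
noncomputable def carlitzTpow (F : Type) [Field F] [Fintype F] : ℕ → Polynomial (Polynomial F)
  | 0 => X
  | n + 1 => (carlitzTpow F n).comp (Polynomial.C Polynomial.X * X + X ^ (Fintype.card F))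

/-- The Carlitz module polynomial `C_m(x) ∈ (𝔽_q[T])[x]` for `m ∈ A = 𝔽_q[T]`:
it is determined by `𝔽_q`-linearity in `m` together with
`C_{T^n}(x) = C_T(C_T(⋯ C_T(x)⋯))` (`n`-fold composition of `C_T(x) = T·x + x^q`). -/
noncomputable def carlitz (F : Type) [Field F] [Fintype F] (m : Polynomial F) :
    Polynomial (Polynomial F) :=
  m.sum fun i c => Polynomial.C (Polynomial.C c) * carlitzTpow F i

/-- Evaluation `C_m(α) ∈ 𝔽_q[T]` of the Carlitz polynomial `C_m(x)` at `α ∈ 𝔽_q[T]`. -/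
noncomputable def carlitzEval (F : Type) [Field F] [Fintype F] (m α : Polynomial F) :
    Polynomial F :=
  (carlitz F m).eval α

namespace CarlitzAux

variable (F : Type) [Field F] [Fintype F]

local notation "q" => Fintype.card F

lemma exists_char : ∃ p k : ℕ, p.Prime ∧ q = p ^ k ∧ CharP F p := by
  obtain ⟨p, hchar⟩ := CharP.exists F
  haveI := hchar
  obtain ⟨n, hp, hcard⟩ := FiniteField.card F p
  exact ⟨p, n, hp, hcard, hchar⟩

variable {R : Type} [CommRing R] [Algebra F R] [Nontrivial R]

lemma frob_add (x y : R) : (x + y) ^ q = x ^ q + y ^ q := by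
  obtain ⟨p, k, hp, hc, hF⟩ := exists_char F
  haveI := hF
  haveI := Fact.mk hp
  haveI : CharP R p := charP_of_injective_algebraMap' F (A := R) p
  rw [hc]; exact add_pow_char_pow ..

lemma frob_sub (x y : R) : (x - y) ^ q = x ^ q - y ^ q := by
  obtain ⟨p, k, hp, hc, hF⟩ := exists_char F
  haveI := hF
  haveI := Fact.mk hp
  haveI : CharP R p := charP_of_injective_algebraMap' F (A := R) p
  rw [hc]; exact sub_pow_char_pow ..

lemma frob_sum {ι : Type*} (s : Finset ι) (f : ι → R) :
    (∑ i ∈ s, f i) ^ q = ∑ i ∈ s, f i ^ q := by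
  obtain ⟨p, k, hp, hc, hF⟩ := exists_char F
  haveI := hF
  haveI := Fact.mk hp
  haveI : CharP R p := charP_of_injective_algebraMap' F (A := R) p
  rw [hc]; exact sum_pow_char_pow ..

lemma tp_succ (n : ℕ) :
    carlitzTpow F (n + 1) = C X * carlitzTpow F n + carlitzTpow F n ^ q := by
  induction n with
  | zero =>
      show Polynomial.comp X _ = _
      simp [carlitzTpow]
  | succ n ih =>
      show (carlitzTpow F (n + 1)).comp _ = _
      conv_lhs => rw [ih]
      rw [add_comp, mul_comp, C_comp, pow_comp]
      rfl

lemma carlitz_monomial (n : ℕ) (a : F) :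
    carlitz F (monomial n a) = C (C a) * carlitzTpow F n := by
  unfold carlitz
  rw [sum_monomial_index]
  simp

lemma carlitz_add (m n : Polynomial F) :
    carlitz F (m + n) = carlitz F m + carlitz F n := by
  unfold carlitz
  rw [sum_add_index] <;> simp [add_mul]

lemma carlitz_zero : carlitz F 0 = 0 := by
  unfold carlitz; simp

lemma carlitz_one : carlitz F 1 = X := by
  have h := carlitz_monomial F 0 (1 : F)
  simpa [carlitzTpow] using h

lemma carlitz_sub (m n : Polynomial F) :
    carlitz F (m - n) = carlitz F m - carlitz F n := by
  have := carlitz_add F (m - n) n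
  rw [sub_add_cancel] at this
  linear_combination -this

lemma Cpow (a : F) : (C (C a) : Polynomial (Polynomial F)) ^ q = C (C a) := by
  rw [← map_pow, ← map_pow, FiniteField.pow_card]

lemma carlitz_X_mul (m : Polynomial F) :
    carlitz F (X * m) = C X * carlitz F m + carlitz F m ^ q := by
  induction m using Polynomial.induction_on' with
  | add p r hp hr =>
      rw [mul_add, carlitz_add, carlitz_add, hp, hr, frob_add F]
      ring
  | monomial n a =>
      rw [X_mul_monomial, carlitz_monomial, carlitz_monomial, tp_succ, mul_pow, Cpow]
      ring

lemma carlitz_C_mul (c : F) (m : Polynomial F) :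
    carlitz F (C c * m) = C (C c) * carlitz F m := by
  induction m using Polynomial.induction_on' with
  | add p r hp hr => rw [mul_add, carlitz_add, carlitz_add, hp, hr, mul_add]
  | monomial n a => rw [C_mul_monomial, carlitz_monomial, carlitz_monomial, ← mul_assoc, ← C_mul, ← C_mul]

noncomputable def carD : ℕ → ℕ → Polynomial F
  | 0, 0 => 1
  | 0, _ + 1 => 0
  | n + 1, 0 => X * carD n 0
  | n + 1, j + 1 => X * carD n (j + 1) + carD n j ^ (Fintype.card F)

lemma carD_zero_of_lt : ∀ n j : ℕ, n < j → carD F n j = 0 := by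
  intro n
  induction n with
  | zero => intro j hj; cases j with
      | zero => omega
      | succ j => simp [carD]
  | succ n ih =>
      intro j hj
      cases j with
      | zero => omega
      | succ j =>
          show X * carD F n (j + 1) + carD F n j ^ q = 0
          rw [ih (j+1) (by omega), ih j (by omega)]
          simp [zero_pow Fintype.card_ne_zero]

lemma carD_diag : ∀ n : ℕ, carD F n n = 1 := by
  intro n
  induction n with
  | zero => rfl
  | succ n ih =>
      show X * carD F n (n + 1) + carD F n n ^ q = 1
      rw [ih, carD_zero_of_lt F n (n+1) (by omega)]
      simp

lemma carD_zero_right : ∀ n : ℕ, carD F n 0 = X ^ n := by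
  intro n
  induction n with
  | zero => rfl
  | succ n ih => show X * carD F n 0 = X ^ (n+1); rw [ih, pow_succ]; ring

lemma carD_key : ∀ n j : ℕ,
    carD F n (j + 1) * (X ^ q ^ (j + 1) - X) = carD F n j ^ q - carD F n j := by
  intro n
  induction n with
  | zero =>
      intro j
      cases j with
      | zero => simp [carD]
      | succ j => simp [carD, zero_pow Fintype.card_ne_zero]
  | succ n ih =>
      intro j
      cases j with
      | zero =>
          show (X * carD F n 1 + carD F n 0 ^ q) * (X ^ q ^ 1 - X)
              = (X * carD F n 0) ^ q - X * carD F n 0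
          have h0 := ih 0
          rw [pow_one] at h0 ⊢
          rw [mul_pow]
          linear_combination (X : Polynomial F) * h0
      | succ j =>
          show (X * carD F n (j + 2) + carD F n (j + 1) ^ q) * (X ^ q ^ (j + 2) - X)
              = (X * carD F n (j + 1) + carD F n j ^ q) ^ q
                - (X * carD F n (j + 1) + carD F n j ^ q)
          have h1 := ih (j + 1)
          have h2 : carD F n (j + 1) ^ q * (X ^ q ^ (j + 2) - X ^ q)
              = (carD F n j ^ q) ^ q - carD F n j ^ q := by
            have : (carD F n (j + 1) * (X ^ q ^ (j + 1) - X)) ^ q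
                = (carD F n j ^ q - carD F n j) ^ q := by rw [ih j]
            rw [mul_pow, frob_sub F, frob_sub F, ← pow_mul, ← pow_succ] at this
            exact this
          rw [frob_add F, mul_pow]
          linear_combination (X : Polynomial F) * h1 + h2

lemma tp_eval_one : ∀ n : ℕ,
    (carlitzTpow F n).eval 1 = ∑ j ∈ Finset.range (n + 1), carD F n j := by
  intro n
  induction n with
  | zero => simp [carlitzTpow, carD]
  | succ n ih =>
      rw [tp_succ, eval_add, eval_mul, eval_C, eval_pow, ih, frob_sum F]
      rw [Finset.sum_range_succ' (fun j => carD F (n + 1) j) (n + 1)]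
      have e1 : ∀ j ∈ Finset.range (n + 1),
          carD F (n + 1) (j + 1) = X * carD F n (j + 1) + carD F n j ^ q := fun _ _ => rfl
      rw [Finset.sum_congr rfl e1, Finset.sum_add_distrib]
      have e2 : carD F (n + 1) 0 = X * carD F n 0 := rfl
      have e3 : (∑ j ∈ Finset.range (n + 1), X * carD F n (j + 1)) + X * carD F n 0
          = ∑ j ∈ Finset.range (n + 2), X * carD F n j :=
        (Finset.sum_range_succ' (fun j => X * carD F n j) (n + 1)).symm
      have e4 : (∑ j ∈ Finset.range (n + 2), X * carD F n j)
          = ∑ j ∈ Finset.range (n + 1), X * carD F n j := by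
        rw [Finset.sum_range_succ, carD_zero_of_lt F n (n + 1) (by omega), mul_zero, add_zero]
      rw [e2, add_assoc,
        add_comm (∑ j ∈ Finset.range (n + 1), carD F n j ^ q) (X * carD F n 0), ← add_assoc,
        e3, e4, Finset.mul_sum]

end CarlitzAux

namespace CarlitzAux
variable (F : Type) [Field F] [Fintype F]
local notation "q" => Fintype.card F

lemma not_dvd_frob_poly (Q : Polynomial F) (hQ : Q.Monic) (hQirr : Irreducible Q)
    (m : ℕ) (hm0 : m ≠ 0) (hmd : m < Q.natDegree) :
    ¬ Q ∣ (X ^ q ^ m - X : Polynomial F) := by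
  intro h
  haveI : Fact (Irreducible Q) := ⟨hQirr⟩
  obtain ⟨p, k, hp, hc, hF⟩ := exists_char F
  haveI := hF
  haveI := Fact.mk hp
  set K := AdjoinRoot Q with hK
  haveI : Module.Finite F K := (AdjoinRoot.powerBasis hQ.ne_zero).finite
  haveI : Finite K := Module.finite_of_finite F
  haveI : Fintype K := Fintype.ofFinite K
  have hcardK : Fintype.card K = q ^ Q.natDegree := by
    rw [Module.card_eq_pow_finrank (K := F) (V := K), (AdjoinRoot.powerBasis hQ.ne_zero).finrank,
      AdjoinRoot.powerBasis_dim]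
  have hroot : (AdjoinRoot.root Q) ^ q ^ m = AdjoinRoot.root Q := by
    have h0 : AdjoinRoot.mk Q (X ^ q ^ m - X) = 0 := AdjoinRoot.mk_eq_zero.mpr h
    rw [map_sub, map_pow, AdjoinRoot.mk_X] at h0
    exact sub_eq_zero.mp h0
  haveI : CharP K p := charP_of_injective_algebraMap' F (A := K) p
  let φ : K →ₐ[F] K :=
    { toRingHom := iterateFrobenius K p (k * m)
      commutes' := fun c => by
        show (algebraMap F K c) ^ p ^ (k * m) = algebraMap F K c
        rw [pow_mul, ← hc, ← map_pow, FiniteField.pow_card_pow] }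
  have hφ : ∀ x : K, φ x = x ^ q ^ m := fun x => by
    show iterateFrobenius K p (k * m) x = _
    rw [iterateFrobenius_def, pow_mul, ← hc]
  have hall : ∀ u : K, u ^ q ^ m = u := by
    have hsub : Algebra.adjoin F ({AdjoinRoot.root Q} : Set K)
        ≤ AlgHom.equalizer φ (AlgHom.id F K) := by
      apply Algebra.adjoin_le
      intro x hx
      rw [Set.mem_singleton_iff] at hx
      subst hx
      show φ (AdjoinRoot.root Q) = AlgHom.id F K (AdjoinRoot.root Q)
      rw [hφ, hroot]
      rfl
    intro u
    have hu : u ∈ AlgHom.equalizer φ (AlgHom.id F K) := by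
      apply hsub
      rw [AdjoinRoot.adjoinRoot_eq_top]
      trivial
    have h2 : φ u = u := hu
    rw [← hφ, h2]
  have hne : (X ^ q ^ m - X : K[X]) ≠ 0 :=
    FiniteField.X_pow_card_pow_sub_X_ne_zero K hm0 Fintype.one_lt_card
  have hsub : (Finset.univ : Finset K).val ⊆ (X ^ q ^ m - X : K[X]).roots := by
    intro u _
    rw [mem_roots hne]
    simp [IsRoot.def, hall u]
  have hle := Polynomial.card_le_degree_of_subset_roots hsub
  rw [FiniteField.X_pow_card_pow_sub_X_natDegree_eq K hm0 Fintype.one_lt_card,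
    Finset.card_univ, hcardK] at hle
  exact absurd hle (by
    push_neg
    exact Nat.pow_lt_pow_right Fintype.one_lt_card hmd)

end CarlitzAux

namespace CarlitzAux
variable (F : Type) [Field F] [Fintype F]
local notation "q" => Fintype.card F

lemma key (Q : Polynomial F) (hQ : Q.Monic) (hQirr : Irreducible Q) :
    Q ∣ carlitzEval F Q 1 - 1 := by
  classical
  set d := Q.natDegree with hd
  have hd0 : 0 < d := hQirr.natDegree_pos
  set E : ℕ → Polynomial F :=
    fun j => ∑ i ∈ Finset.range (d + 1), C (Q.coeff i) * carD F i j with hE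
  have h1 : carlitzEval F Q 1 = ∑ j ∈ Finset.range (d + 1), E j := by
    unfold carlitzEval carlitz
    rw [Polynomial.sum_over_range Q (fun n => by simp), eval_finset_sum, ← hd]
    have hin : ∀ i ∈ Finset.range (d + 1),
        (C (C (Q.coeff i)) * carlitzTpow F i).eval 1
          = ∑ j ∈ Finset.range (d + 1), C (Q.coeff i) * carD F i j := by
      intro i hi
      rw [eval_mul, eval_C, tp_eval_one, Finset.mul_sum]
      refine Finset.sum_subset (Finset.range_subset_range.mpr ?_) ?_
      · have := Finset.mem_range.mp hi; omega
      · intro j hj hj'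
        rw [carD_zero_of_lt F i j ?_, mul_zero]
        have := Finset.mem_range.not.mp hj'
        omega
    rw [Finset.sum_congr rfl hin, Finset.sum_comm]
  have h2 : E 0 = Q := by
    have hmon : ∀ i ∈ Finset.range (d + 1),
        C (Q.coeff i) * carD F i 0 = monomial i (Q.coeff i) := by
      intro i _
      rw [carD_zero_right, C_mul_X_pow_eq_monomial]
    show (∑ i ∈ Finset.range (d + 1), C (Q.coeff i) * carD F i 0) = Q
    rw [Finset.sum_congr rfl hmon]
    exact (Q.as_sum_range' (d + 1) (by omega)).symm
  have h3 : E d = 1 := by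
    show (∑ i ∈ Finset.range (d + 1), C (Q.coeff i) * carD F i d) = 1
    rw [Finset.sum_range_succ]
    have hz : ∀ i ∈ Finset.range d, C (Q.coeff i) * carD F i d = 0 := by
      intro i hi
      rw [carD_zero_of_lt F i d (Finset.mem_range.mp hi), mul_zero]
    rw [Finset.sum_congr rfl hz, Finset.sum_const_zero, zero_add, carD_diag,
      mul_one, Monic.coeff_natDegree hQ, map_one]
  have h4 : ∀ j : ℕ, E (j + 1) * (X ^ q ^ (j + 1) - X) = E j ^ q - E j := by
    intro j
    show (∑ i ∈ Finset.range (d + 1), C (Q.coeff i) * carD F i (j + 1)) * (X ^ q ^ (j + 1) - X)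
        = (∑ i ∈ Finset.range (d + 1), C (Q.coeff i) * carD F i j) ^ q
          - ∑ i ∈ Finset.range (d + 1), C (Q.coeff i) * carD F i j
    rw [Finset.sum_mul, frob_sum F, ← Finset.sum_sub_distrib]
    refine Finset.sum_congr rfl ?_
    intro i _
    rw [mul_pow, ← C_pow, FiniteField.pow_card, mul_assoc, carD_key, mul_sub]
  have h5 : ∀ j, j < d → Q ∣ E j := by
    intro j
    induction j with
    | zero => intro _; rw [h2]
    | succ j ih =>
        intro hjd
        have hEj : Q ∣ E j := ih (by omega)
        have hdiv : Q ∣ E (j + 1) * (X ^ q ^ (j + 1) - X) := by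
          rw [h4]
          exact dvd_sub (dvd_pow hEj Fintype.card_ne_zero) hEj
        have hprime : Prime Q := hQirr.prime
        rcases hprime.2.2 _ _ hdiv with h' | h'
        · exact h'
        · exact absurd h' (not_dvd_frob_poly F Q hQ hQirr (j + 1) (by omega) (by omega))
  rw [h1, Finset.sum_range_succ, h3]
  have : (∑ j ∈ Finset.range d, E j) + 1 - 1 = ∑ j ∈ Finset.range d, E j := by ring
  rw [this]
  exact Finset.dvd_sum fun j hj => h5 j (Finset.mem_range.mp hj)

lemma dvd_mul_action (Q m : Polynomial F) (h : Q ∣ carlitzEval F m 1) :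
    ∀ a : Polynomial F, Q ∣ carlitzEval F (a * m) 1 := by
  intro a
  induction a using Polynomial.induction_on with
  | C c =>
      unfold carlitzEval at h ⊢
      rw [carlitz_C_mul, eval_mul, eval_C]
      exact Dvd.dvd.mul_left h _
  | add p r hp hr =>
      unfold carlitzEval at hp hr ⊢
      rw [add_mul, carlitz_add, eval_add]
      exact dvd_add hp hr
  | monomial n c hn =>
      have hrw : C c * X ^ (n + 1) * m = X * (C c * X ^ n * m) := by ring
      unfold carlitzEval at hn ⊢
      rw [hrw, carlitz_X_mul, eval_add, eval_mul, eval_C, eval_pow]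
      exact dvd_add (Dvd.dvd.mul_left hn _) (dvd_pow hn Fintype.card_ne_zero)

end CarlitzAux


/-- Every monic irreducible `Q` dividing the Mersenne number `M_P = α·C_P(1)` satisfies
`Q ≡ 1 (mod P)`. -/
theorem prime_divisor_of_mersenne_congruent_one (F : Type) [Field F] [Fintype F]
    (P : Polynomial F) (hP : P.Monic) (hPirr : Irreducible P) (α : F) (hα : α ≠ 0)
    (Q : Polynomial F) (hQ : Q.Monic) (hQirr : Irreducible Q)
    (hdvd : Q ∣ Polynomial.C α * carlitzEval F P 1) :
    P ∣ Q - 1 := by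
  classical
  have hQP : Q ∣ carlitzEval F P 1 := by
    have heq : carlitzEval F P 1 = Polynomial.C α⁻¹ * (Polynomial.C α * carlitzEval F P 1) := by
      rw [← mul_assoc, ← Polynomial.C_mul, inv_mul_cancel₀ hα, Polynomial.C_1, one_mul]
    rw [heq]
    exact Dvd.dvd.mul_left hdvd _
  let I : Ideal (Polynomial F) :=
    { carrier := { m | Q ∣ carlitzEval F m 1 }
      add_mem' := fun {a b} ha hb => by
        show Q ∣ carlitzEval F (a + b) 1
        unfold carlitzEval at *
        rw [CarlitzAux.carlitz_add, eval_add]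
        exact dvd_add ha hb
      zero_mem' := by
        show Q ∣ carlitzEval F 0 1
        unfold carlitzEval
        rw [CarlitzAux.carlitz_zero, eval_zero]
        exact dvd_zero Q
      smul_mem' := fun c {x} hx => by
        have := CarlitzAux.dvd_mul_action F Q x hx c
        simpa [smul_eq_mul] using this }
  have hPI : P ∈ I := hQP
  have hQm1 : (Q - 1) ∈ I := by
    show Q ∣ carlitzEval F (Q - 1) 1
    have heq : carlitzEval F (Q - 1) 1 = carlitzEval F Q 1 - 1 := by
      unfold carlitzEval
      rw [CarlitzAux.carlitz_sub, eval_sub, CarlitzAux.carlitz_one, eval_X]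
    rw [heq]
    exact CarlitzAux.key F Q hQ hQirr
  have hne : I ≠ ⊤ := by
    intro htop
    have h1 : (1 : Polynomial F) ∈ I := htop ▸ trivial
    have hdvd1 : Q ∣ (1 : Polynomial F) := by
      have h2 : Q ∣ carlitzEval F 1 1 := h1
      simpa [carlitzEval, CarlitzAux.carlitz_one] using h2
    exact hQirr.not_isUnit (isUnit_of_dvd_one hdvd1)
  have hmax : (Ideal.span {P}).IsMaximal := PrincipalIdealRing.isMaximal_of_irreducible hPirr
  have hspan : Ideal.span {P} = I :=
    hmax.eq_of_le hne (Ideal.span_le.mpr (Set.singleton_subset_iff.mpr hPI))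
  have hmem : Q - 1 ∈ Ideal.span {P} := by rw [hspan]; exact hQm1
  exact Ideal.mem_span_singleton.mp hmem
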